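/- For any fractional ideal I of the ring of integers O_F of a totally complex number field F of degree 2k, the shortest nonzero vector of the lattice ψ(I) obtained by the relative canonical embedding ψ: F → ℂ^k satisfies λ₁(ψ(I)) ≥ √k · N(I)^{1/(2k)}, where N(I) is the absolute norm of I. -/

import Mathlib

open NumberField
open scoped nonZeroDivisors

/-- For any nonzero fractional ideal `I` of the ring of integers of a
totally complex number field `F` of degree `2k`, every nonzero element `x ∈ I` satisfies
`‖ψ(x)‖ ≥ √k · N(I)^(1/(2k))`, where `ψ(x) = (σ₁(x), …, σ_k(x))` is the relative canonical
embedding (one embedding chosen from each complex-conjugate pair) and the norm on `ℂᵏ` comes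
from the real inner product `⟨x,y⟩ = Re(x†y)`. -/
theorem shortest_vector_fractional_ideal_lower_bound
    (F : Type*) [Field F] [NumberField F] (k : ℕ) (hk : 0 < k)
    (σ : Fin k → (F →+* ℂ))
    (hdeg : Module.finrank ℚ F = 2 * k)
    (hcx : ∀ i, σ i ≠ (starRingEnd ℂ).comp (σ i))
    (hσ : ∀ φ : F →+* ℂ, ∃! i : Fin k, φ = σ i ∨ φ = (starRingEnd ℂ).comp (σ i))
    (I : FractionalIdeal (𝓞 F)⁰ F) (hI : I ≠ 0)
    (x : F) (hx : x ∈ I) (hx0 : x ≠ 0) :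
    Real.sqrt (∑ i, ‖σ i x‖ ^ 2)
      ≥ Real.sqrt k * (FractionalIdeal.absNorm I : ℝ) ^ ((1 : ℝ) / (2 * k)) := by
  classical
  -- Step 1: the absolute norm of `I` bounds `|N(x)|` from below.
  have hnormle : (FractionalIdeal.absNorm I : ℚ) ≤ |Algebra.norm ℚ x| := by
    have hxI : FractionalIdeal.spanSingleton (𝓞 F)⁰ x ≤ I :=
      FractionalIdeal.spanSingleton_le_iff_mem.mpr hx
    have hxne : FractionalIdeal.spanSingleton (𝓞 F)⁰ x ≠ 0 := by
      simpa [FractionalIdeal.spanSingleton_eq_zero_iff] using hx0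
    have hle1 : I⁻¹ * FractionalIdeal.spanSingleton (𝓞 F)⁰ x ≤ 1 := by
      calc I⁻¹ * FractionalIdeal.spanSingleton (𝓞 F)⁰ x ≤ I⁻¹ * I :=
            by gcongr
        _ = 1 := inv_mul_cancel₀ hI
    obtain ⟨J, hJ⟩ := FractionalIdeal.le_one_iff_exists_coeIdeal.mp hle1
    have hspan : FractionalIdeal.spanSingleton (𝓞 F)⁰ x = I * (J : FractionalIdeal (𝓞 F)⁰ F) := by
      rw [hJ, ← mul_assoc, mul_inv_cancel₀ hI, one_mul]
    have hJne : J ≠ 0 := by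
      rintro rfl; simp [hspan] at hxne
    have hJ1 : (1 : ℚ) ≤ Ideal.absNorm J := by
      exact_mod_cast Nat.one_le_iff_ne_zero.mpr (by simpa [Ideal.absNorm_eq_zero_iff] using hJne)
    have hNpos : 0 < FractionalIdeal.absNorm I := by
      rcases (FractionalIdeal.absNorm_nonneg I).lt_or_eq with h | h
      · exact h
      · exact absurd (FractionalIdeal.absNorm_eq_zero_iff.mp h.symm) hI
    calc (FractionalIdeal.absNorm I : ℚ) = FractionalIdeal.absNorm I * 1 := by ring
      _ ≤ FractionalIdeal.absNorm I * Ideal.absNorm J :=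
          mul_le_mul_of_nonneg_left hJ1 hNpos.le
      _ = FractionalIdeal.absNorm (FractionalIdeal.spanSingleton (𝓞 F)⁰ x) := by
          rw [hspan, _root_.map_mul, FractionalIdeal.coeIdeal_absNorm]
      _ = |Algebra.norm ℚ x| := by rw [FractionalIdeal.absNorm_span_singleton]
  -- Step 2: the product of the `|σ i x|²` is `|N(x)|`.
  have hprod : (∏ i, ‖σ i x‖ ^ 2) = |((Algebra.norm ℚ x : ℚ) : ℝ)| := by
    set f : Fin k × Bool → (F →+* ℂ) :=
      fun p => if p.2 then (starRingEnd ℂ).comp (σ p.1) else σ p.1 with hf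
    have hmem : ∀ p : Fin k × Bool, f p = σ p.1 ∨ f p = (starRingEnd ℂ).comp (σ p.1) := by
      rintro ⟨i, b⟩; cases b <;> simp [hf]
    have hbij : Function.Bijective f := by
      constructor
      · rintro ⟨i, b⟩ ⟨j, c⟩ h
        obtain ⟨m, -, hu⟩ := hσ (f (i, b))
        have hij : i = j := by
          rw [hu i (hmem (i, b)), hu j (h ▸ hmem (j, c))]
        subst hij
        have hbc : b = c := by
          cases b <;> cases c
          · rfl
          · exact absurd (by simpa [hf] using h) (hcx i)
          · exact absurd (by simpa [hf] using h.symm) (hcx i)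
          · rfl
        rw [hbc]
      · intro φ
        obtain ⟨i, hi, -⟩ := hσ φ
        rcases hi with hi | hi
        · exact ⟨(i, false), hi.symm⟩
        · exact ⟨(i, true), hi.symm⟩
    set e := Equiv.ofBijective f hbij with he
    have h1 : (∏ φ : F →+* ℂ, ‖φ x‖) = ∏ p : Fin k × Bool, ‖f p x‖ := by
      rw [← Equiv.prod_comp e (fun φ => ‖φ x‖)]
      rfl
    have h2 : (∏ p : Fin k × Bool, ‖f p x‖) = ∏ i, ‖σ i x‖ ^ 2 := by
      rw [Fintype.prod_prod_type]
      refine Finset.prod_congr rfl fun i _ => ?_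
      rw [Fintype.prod_bool]
      simp [hf, Complex.norm_conj, sq]
    have h3 : (∏ φ : F →+* ℂ, ‖φ x‖) = |((Algebra.norm ℚ x : ℚ) : ℝ)| := by
      have h := congr_arg (‖·‖) (Algebra.norm_eq_prod_embeddings ℚ ℂ (x := x))
      rw [norm_prod] at h
      rw [Fintype.prod_equiv (RingHom.equivRatAlgHom F ℂ) (fun φ => ‖φ x‖)
        (fun ψ : F →ₐ[ℚ] ℂ => ‖ψ x‖) (fun _ => rfl), ← h, eq_ratCast]
      rw [show ((Algebra.norm ℚ x : ℚ) : ℂ) = (((Algebra.norm ℚ x : ℚ) : ℝ) : ℂ) by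
        push_cast; ring, Complex.norm_real, Real.norm_eq_abs]
    rw [← h2, ← h1, h3]
  -- Step 3: put everything together via AM-GM.
  set N : ℝ := (FractionalIdeal.absNorm I : ℝ) with hN
  have hNpos : 0 < N := by
    have : FractionalIdeal.absNorm I ≠ 0 := fun h =>
      hI (FractionalIdeal.absNorm_eq_zero_iff.mp h)
    have h0 : 0 < FractionalIdeal.absNorm I :=
      lt_of_le_of_ne (FractionalIdeal.absNorm_nonneg I) (Ne.symm this)
    rw [hN]; exact_mod_cast h0
  have hk' : (0 : ℝ) < k := Nat.cast_pos.mpr hk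
  have hNle : N ≤ ∏ i, ‖σ i x‖ ^ 2 := by
    rw [hprod, hN]
    calc (FractionalIdeal.absNorm I : ℝ) ≤ ((|Algebra.norm ℚ x| : ℚ) : ℝ) := by
          exact_mod_cast hnormle
      _ = |((Algebra.norm ℚ x : ℚ) : ℝ)| := by push_cast; ring
  have hanonneg : ∀ i ∈ Finset.univ, (0 : ℝ) ≤ ‖σ i x‖ ^ 2 := fun i _ => by positivity
  have hAMGM := Real.geom_mean_le_arith_mean_weighted Finset.univ (fun _ => 1 / (k : ℝ))
    (fun i => ‖σ i x‖ ^ 2) (fun i _ => by positivity)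
    (by simp [Finset.sum_const, Finset.card_univ]; field_simp) hanonneg
  rw [Real.finset_prod_rpow Finset.univ _ hanonneg, ← Finset.mul_sum] at hAMGM
  have hprodrpow : N ^ ((1 : ℝ) / k) ≤ (∏ i, ‖σ i x‖ ^ 2) ^ ((1 : ℝ) / k) :=
    Real.rpow_le_rpow hNpos.le hNle (by positivity)
  have key : (k : ℝ) * N ^ ((1 : ℝ) / k) ≤ ∑ i, ‖σ i x‖ ^ 2 := by
    have h := le_trans hprodrpow hAMGM
    rw [div_mul_eq_mul_div, le_div_iff₀ hk'] at h
    · linarith [h]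
  have heq : Real.sqrt k * N ^ ((1 : ℝ) / (2 * k)) = Real.sqrt ((k : ℝ) * N ^ ((1 : ℝ) / k)) := by
    rw [Real.sqrt_mul hk'.le, Real.sqrt_eq_rpow (N ^ ((1 : ℝ) / k)), ← Real.rpow_mul hNpos.le]
    congr 1
    field_simp
  rw [ge_iff_le, heq]
  exact Real.sqrt_le_sqrt key
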